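/- The minimal generators of the chiral space over the integrals of motion (even sector): let 𝔪 ⊂ 𝒟 be the ideal generated by all the variables t₁,t₃,t₅,…. For every integer m ≥ 0, the quotient A_m/𝔪A_m is isomorphic as a complex vector space to W_m. -/

import Mathlib

open scoped BigOperators

noncomputable section

/-- The ring `𝒟 = ℂ[t₁,t₃,t₅,…]`: variable `k : ℕ` stands for `t_{2k+1}`. -/
abbrev Dring : Type := MvPolynomial ℕ ℂ

/-- The series `∑_{k≥1} t_{2k-1} z^{2k-1}/(2k-1)`. -/
def genX : PowerSeries Dring :=
  PowerSeries.mk fun n =>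
    if n % 2 = 1 then ((n : ℂ)⁻¹) • (MvPolynomial.X ((n - 1) / 2) : Dring) else 0

/-- `T n` is the polynomial `T₋ₙ`, the `n`-th coefficient of `exp(genX) = ∑_j genX^j/j!`
(the sum may be truncated at `j = n` since `genX` has zero constant term). -/
def T (n : ℕ) : Dring :=
  ∑ j ∈ Finset.range (n + 1),
    ((j.factorial : ℂ)⁻¹) • (PowerSeries.coeff (R := Dring) n (genX ^ j))

/-- Index of a basis vector of the fermionic Fock space: a pair `(R, S)` of finite
sets of modes; `k ∈ R` stands for the factor `b_{k+1}` and `k ∈ S` for `a_{k+1}`. -/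
abbrev FockIdx : Type := Finset ℕ × Finset ℕ

/-- The full fermionic Fock space `⊕_m F_m`, with basis `FockIdx`. -/
abbrev Fock : Type := FockIdx →₀ ℂ

/-- `𝒟 ⊗ (⊕_m F_m)`, a free `𝒟`-module with basis `FockIdx`. -/
abbrev DFock : Type := FockIdx →₀ Dring

def charge (x : FockIdx) : ℤ := (x.1.card : ℤ) - x.2.card

def fsingle (x : FockIdx) : Fock := Finsupp.single x 1

/-- `αₙ` (for `n = k+1`, `k : ℕ`): wedging with `a_{k+1}` with the Koszul sign `(-1)^{deg ξ}`. -/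
def alpha (k : ℕ) : Fock →ₗ[ℂ] Fock :=
  Finsupp.lsum ℂ fun x => LinearMap.toSpanSingleton ℂ Fock
    (if k ∈ x.2 then 0 else
      (((-1 : ℂ) ^ x.1.card) * ((-1 : ℂ) ^ (x.2.filter (· < k)).card)) •
        fsingle (x.1, insert k x.2))

/-- `βₙ` (for `n = k+1`): contraction with `b_{k+1}*`, with Koszul signs. -/
def beta (k : ℕ) : Fock →ₗ[ℂ] Fock :=
  Finsupp.lsum ℂ fun x => LinearMap.toSpanSingleton ℂ Fock
    (if k ∈ x.1 then ((-1 : ℂ) ^ (x.1.filter (· < k)).card) • fsingle (x.1.erase k, x.2)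
     else 0)

/-- `ω = ∑_{n≥1} αₙ βₙ` (on each basis vector only finitely many terms are nonzero). -/
def omega : Fock →ₗ[ℂ] Fock :=
  Finsupp.lsum ℂ fun x => LinearMap.toSpanSingleton ℂ Fock
    (∑ k ∈ x.1, alpha k (beta k (fsingle x)))

/-- The charge-`m` Fock space `F_m ⊆ Fock`. -/
def FockC (m : ℤ) : Submodule ℂ Fock := Finsupp.supported ℂ ℂ {x | charge x = m}

def dsingle (x : FockIdx) : DFock := Finsupp.single x 1

/-- `αₙ`, extended `𝒟`-linearly to `𝒟 ⊗ Fock`. -/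
def dAlpha (k : ℕ) : DFock →ₗ[Dring] DFock :=
  Finsupp.lsum Dring fun x => LinearMap.toSpanSingleton Dring DFock
    (if k ∈ x.2 then 0 else
      (((-1 : Dring) ^ x.1.card) * ((-1 : Dring) ^ (x.2.filter (· < k)).card)) •
        dsingle (x.1, insert k x.2))

/-- `βₙ`, extended `𝒟`-linearly to `𝒟 ⊗ Fock`. -/
def dBeta (k : ℕ) : DFock →ₗ[Dring] DFock :=
  Finsupp.lsum Dring fun x => LinearMap.toSpanSingleton Dring DFock
    (if k ∈ x.1 then ((-1 : Dring) ^ (x.1.filter (· < k)).card) • dsingle (x.1.erase k, x.2)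
     else 0)

/-- `d = ∑_{n≥1} T₋₍₂ₙ₋₁₎ βₙ : 𝒟⊗F_m → 𝒟⊗F_{m-1}`. -/
def dOp : DFock →ₗ[Dring] DFock :=
  Finsupp.lsum Dring fun x => LinearMap.toSpanSingleton Dring DFock
    (∑ k ∈ x.1, T (2 * k + 1) • dBeta k (dsingle x))

/-- `ω = ∑_{n≥1} αₙ βₙ`, extended `𝒟`-linearly. -/
def dOmega : DFock →ₗ[Dring] DFock :=
  Finsupp.lsum Dring fun x => LinearMap.toSpanSingleton Dring DFock
    (∑ k ∈ x.1, dAlpha k (dBeta k (dsingle x)))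

/-- The charge-`m` part `𝒟 ⊗ F_m`, as a `𝒟`-submodule. -/
def DFockC (m : ℤ) : Submodule Dring DFock := Finsupp.supported Dring Dring {x | charge x = m}


/-- The charge-`m` part `𝒟 ⊗ F_m`, as a `ℂ`-submodule of `𝒟 ⊗ Fock`. -/
def DFockCc (m : ℤ) : Submodule ℂ DFock := Finsupp.supported Dring ℂ {x | charge x = m}

/-- The `ℂ`-subspace `d(𝒟⊗F_{m+1}) + ω(𝒟⊗F_{m+2})` of `𝒟⊗F_m`, so that
`A_m = (𝒟⊗F_m)/NA m` is the chiral space of local fields (even sector). -/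
def NA (m : ℤ) : Submodule ℂ DFock :=
  Submodule.map (dOp.restrictScalars ℂ) (DFockCc (m + 1)) ⊔
    Submodule.map (dOmega.restrictScalars ℂ) (DFockCc (m + 2))

/-- The chiral space `A_m = (𝒟⊗F_m)/(d(𝒟⊗F_{m+1}) + ω(𝒟⊗F_{m+2}))` as a `ℂ`-vector
space, realized as the image of `𝒟⊗F_m` in `(𝒟⊗Fock)/NA m`. -/
def Asub (m : ℤ) : Submodule ℂ (DFock ⧸ NA m) := Submodule.map (NA m).mkQ (DFockCc m)

/-- The space `W_m = F_m/ω(F_{m+2})`, realized as the image of `F_m` in the quotient of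
`Fock` by `ω(F_{m+2})` (note `ω(F_{m+2}) ⊆ F_m`). -/
def Wsub (m : ℤ) : Submodule ℂ (Fock ⧸ Submodule.map omega (FockC (m + 2))) :=
  Submodule.map (Submodule.map omega (FockC (m + 2))).mkQ (FockC m)

/-- The ideal `𝔪 = (t₁, t₃, t₅, …) ⊆ 𝒟`. -/
def mIdeal : Ideal Dring := Ideal.span (Set.range (MvPolynomial.X : ℕ → Dring))

/-- The `ℂ`-subspace of `𝒟⊗Fock` corresponding to `𝔪·(𝒟⊗F_m)`. -/
def mPart (m : ℤ) : Submodule ℂ DFock :=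
  Submodule.span ℂ {z | ∃ c ∈ mIdeal, ∃ v ∈ DFockCc m, z = c • v}

/-- `A_m/𝔪A_m`, realized as the image of `𝒟⊗F_m` in the quotient of `𝒟⊗Fock` by
`d(𝒟⊗F_{m+1}) + ω(𝒟⊗F_{m+2}) + 𝔪·(𝒟⊗F_m)`. -/
def AmodM (m : ℤ) : Submodule ℂ (DFock ⧸ (NA m ⊔ mPart m)) :=
  Submodule.map (NA m ⊔ mPart m).mkQ (DFockCc m)

/-! ### Auxiliary machinery for the proof -/

/-- Evaluation of all variables at `0`: the augmentation `ε : 𝒟 → ℂ`. -/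
def eps : Dring →ₐ[ℂ] ℂ := MvPolynomial.aeval 0

/-- Reduction mod `𝔪` on `𝒟 ⊗ Fock`, landing in `Fock`. -/
def piF : DFock →ₗ[ℂ] Fock := Finsupp.mapRange.linearMap eps.toLinearMap

/-- The canonical inclusion `Fock → 𝒟 ⊗ Fock`. -/
def iotaF : Fock →ₗ[ℂ] DFock := Finsupp.mapRange.linearMap (Algebra.linearMap ℂ Dring)

lemma piF_apply (z : DFock) (x : FockIdx) : piF z x = eps (z x) := by
  simp [piF, Finsupp.mapRange.linearMap_apply, Finsupp.mapRange_apply]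

lemma piF_single (x : FockIdx) (r : Dring) :
    piF (Finsupp.single x r) = Finsupp.single x (eps r) := by
  ext y
  simp [piF_apply, Finsupp.single_apply]
  split <;> simp

lemma piF_smul (r : Dring) (z : DFock) : piF (r • z) = eps r • piF z := by
  ext x
  simp [piF_apply, Finsupp.smul_apply, smul_eq_mul, map_mul]

lemma piF_dsingle (x : FockIdx) : piF (dsingle x) = fsingle x := by
  simp [dsingle, fsingle, piF_single, map_one]

lemma eps_sign (n : ℕ) : eps ((-1 : Dring) ^ n) = (-1 : ℂ) ^ n := by
  rw [map_pow, map_neg, map_one]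

lemma single_eq_smul_dsingle (x : FockIdx) (r : Dring) :
    (Finsupp.single x r : DFock) = r • dsingle x := by
  simp [dsingle, Finsupp.smul_single]

lemma dBeta_dsingle (k : ℕ) (x : FockIdx) :
    dBeta k (dsingle x) =
      if k ∈ x.1 then ((-1 : Dring) ^ (x.1.filter (· < k)).card) • dsingle (x.1.erase k, x.2)
      else 0 := by
  simp [dBeta, dsingle, Finsupp.lsum_single, LinearMap.toSpanSingleton_apply]

lemma dAlpha_dsingle (k : ℕ) (y : FockIdx) :
    dAlpha k (dsingle y) =
      if k ∈ y.2 then 0 else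
        (((-1 : Dring) ^ y.1.card) * ((-1 : Dring) ^ (y.2.filter (· < k)).card)) •
          dsingle (y.1, insert k y.2) := by
  simp [dAlpha, dsingle, Finsupp.lsum_single, LinearMap.toSpanSingleton_apply]

lemma beta_fsingle (k : ℕ) (x : FockIdx) :
    beta k (fsingle x) =
      if k ∈ x.1 then ((-1 : ℂ) ^ (x.1.filter (· < k)).card) • fsingle (x.1.erase k, x.2)
      else 0 := by
  simp [beta, fsingle, Finsupp.lsum_single, LinearMap.toSpanSingleton_apply]

lemma alpha_fsingle (k : ℕ) (y : FockIdx) :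
    alpha k (fsingle y) =
      if k ∈ y.2 then 0 else
        (((-1 : ℂ) ^ y.1.card) * ((-1 : ℂ) ^ (y.2.filter (· < k)).card)) •
          fsingle (y.1, insert k y.2) := by
  simp [alpha, fsingle, Finsupp.lsum_single, LinearMap.toSpanSingleton_apply]

lemma piF_dBeta_dsingle (k : ℕ) (x : FockIdx) :
    piF (dBeta k (dsingle x)) = beta k (fsingle x) := by
  rw [dBeta_dsingle, beta_fsingle]
  by_cases hk : k ∈ x.1
  · rw [if_pos hk, if_pos hk, piF_smul, eps_sign, piF_dsingle]
  · rw [if_neg hk, if_neg hk, map_zero]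

lemma piF_dAlpha_dsingle (k : ℕ) (y : FockIdx) :
    piF (dAlpha k (dsingle y)) = alpha k (fsingle y) := by
  rw [dAlpha_dsingle, alpha_fsingle]
  by_cases hk : k ∈ y.2
  · rw [if_pos hk, if_pos hk, map_zero]
  · rw [if_neg hk, if_neg hk, piF_smul, map_mul, eps_sign, eps_sign, piF_dsingle]

lemma piF_dBeta (k : ℕ) (z : DFock) : piF (dBeta k z) = beta k (piF z) := by
  induction z using Finsupp.induction_linear with
  | zero => simp
  | add f g hf hg => simp [hf, hg]
  | single x r =>
      rw [single_eq_smul_dsingle, LinearMap.map_smul, piF_smul, piF_smul, piF_dsingle,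
        LinearMap.map_smul, piF_dBeta_dsingle]

lemma piF_dAlpha (k : ℕ) (z : DFock) : piF (dAlpha k z) = alpha k (piF z) := by
  induction z using Finsupp.induction_linear with
  | zero => simp
  | add f g hf hg => simp [hf, hg]
  | single x r =>
      rw [single_eq_smul_dsingle, LinearMap.map_smul, piF_smul, piF_smul, piF_dsingle,
        LinearMap.map_smul, piF_dAlpha_dsingle]

lemma dOmega_single (x : FockIdx) (r : Dring) :
    dOmega (Finsupp.single x r) = r • ∑ k ∈ x.1, dAlpha k (dBeta k (dsingle x)) := by
  simp [dOmega, Finsupp.lsum_single, LinearMap.toSpanSingleton_apply]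

lemma omega_single (x : FockIdx) (c : ℂ) :
    omega (Finsupp.single x c) = c • ∑ k ∈ x.1, alpha k (beta k (fsingle x)) := by
  simp [omega, Finsupp.lsum_single, LinearMap.toSpanSingleton_apply]

lemma dOp_single (x : FockIdx) (r : Dring) :
    dOp (Finsupp.single x r) = r • ∑ k ∈ x.1, T (2 * k + 1) • dBeta k (dsingle x) := by
  simp [dOp, Finsupp.lsum_single, LinearMap.toSpanSingleton_apply]

lemma piF_dOmega (z : DFock) : piF (dOmega z) = omega (piF z) := by
  induction z using Finsupp.induction_linear with
  | zero => simp
  | add f g hf hg => simp [hf, hg]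
  | single x r =>
      rw [dOmega_single, piF_smul, piF_single, omega_single, map_sum]
      congr 1
      refine Finset.sum_congr rfl fun k _ => ?_
      rw [piF_dAlpha, piF_dBeta, piF_dsingle]

lemma map_eps_genX : PowerSeries.map (eps : Dring →+* ℂ) genX = 0 := by
  ext n
  rw [PowerSeries.coeff_map]
  simp only [genX, PowerSeries.coeff_mk]
  split_ifs with h
  · simp [eps]
  · simp

lemma eps_T {n : ℕ} (hn : n ≠ 0) : eps (T n) = 0 := by
  unfold T
  rw [map_sum]
  refine Finset.sum_eq_zero fun j _ => ?_
  rw [map_smul]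
  have h : eps ((PowerSeries.coeff (R := Dring) n) (genX ^ j)) =
      PowerSeries.coeff (R := ℂ) n ((PowerSeries.map (eps : Dring →+* ℂ) genX) ^ j) := by
    rw [← map_pow, PowerSeries.coeff_map]
    rfl
  rw [h, map_eps_genX]
  rcases Nat.eq_zero_or_pos j with h0 | h0
  · subst h0
    simp [PowerSeries.coeff_one, hn]
  · rw [zero_pow (by omega), map_zero, smul_zero]

lemma piF_dOp (z : DFock) : piF (dOp z) = 0 := by
  induction z using Finsupp.induction_linear with
  | zero => simp
  | add f g hf hg => simp [hf, hg]
  | single x r =>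
      rw [dOp_single, piF_smul, map_sum]
      have : ∀ k ∈ x.1, piF (T (2 * k + 1) • dBeta k (dsingle x)) = 0 := by
        intro k _
        rw [piF_smul, eps_T (by omega), zero_smul]
      rw [Finset.sum_congr rfl this]
      simp

lemma eps_mem_mIdeal {c : Dring} (hc : c ∈ mIdeal) : eps c = 0 := by
  have h : mIdeal ≤ RingHom.ker (eps : Dring →+* ℂ) := by
    rw [mIdeal, Ideal.span_le]
    rintro _ ⟨i, rfl⟩
    simp [RingHom.mem_ker, eps]
  simpa [RingHom.mem_ker] using h hc

lemma mem_mIdeal_of_eps {c : Dring} (hc : eps c = 0) : c ∈ mIdeal := by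
  have h : mIdeal = Ideal.span (MvPolynomial.X '' (Set.univ : Set ℕ)) := by
    rw [mIdeal, Set.image_univ]
  rw [h, MvPolynomial.mem_ideal_span_X_image]
  intro mo hmo
  by_contra hall
  push_neg at hall
  have hmo0 : mo = 0 := by
    ext i
    exact hall i (Set.mem_univ i)
  have hc0 : MvPolynomial.constantCoeff c ≠ 0 := by
    rw [MvPolynomial.constantCoeff_eq]
    simpa [hmo0] using MvPolynomial.mem_support_iff.mp hmo
  apply hc0
  simpa [eps] using hc

lemma piF_iotaF (w : Fock) : piF (iotaF w) = w := by
  ext x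
  simp [piF_apply, iotaF, Finsupp.mapRange.linearMap_apply, Finsupp.mapRange_apply, eps,
    MvPolynomial.algebraMap_eq]

lemma iotaF_apply (w : Fock) (x : FockIdx) : iotaF w x = algebraMap ℂ Dring (w x) := by
  simp [iotaF, Finsupp.mapRange.linearMap_apply, Finsupp.mapRange_apply]

lemma piF_mem_FockC {n : ℤ} {z : DFock} (hz : z ∈ DFockCc n) : piF z ∈ FockC n := by
  rw [DFockCc, Finsupp.mem_supported] at hz
  rw [FockC, Finsupp.mem_supported]
  refine subset_trans ?_ hz
  intro x hx
  simp only [Finset.mem_coe, Finsupp.mem_support_iff] at hx ⊢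
  intro h
  apply hx
  rw [piF_apply, h, map_zero]

lemma iotaF_mem {n : ℤ} {w : Fock} (hw : w ∈ FockC n) : iotaF w ∈ DFockCc n := by
  rw [FockC, Finsupp.mem_supported] at hw
  rw [DFockCc, Finsupp.mem_supported]
  refine subset_trans ?_ hw
  intro x hx
  simp only [Finset.mem_coe, Finsupp.mem_support_iff] at hx ⊢
  intro h
  apply hx
  rw [iotaF_apply, h, map_zero]

lemma charge_shift {x : FockIdx} {k : ℕ} (h1 : k ∈ x.1) (h2 : k ∉ x.2) :
    charge (x.1.erase k, insert k x.2) = charge x - 2 := by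
  have hcard : 1 ≤ x.1.card := Finset.card_pos.mpr ⟨k, h1⟩
  simp only [charge, Finset.card_erase_of_mem h1, Finset.card_insert_of_notMem h2]
  omega

lemma omegaTerm_mem (x : FockIdx) (k : ℕ) (hk : k ∈ x.1) :
    dAlpha k (dBeta k (dsingle x)) ∈
      Finsupp.supported Dring Dring {y | charge y = charge x - 2} := by
  rw [dBeta_dsingle, if_pos hk, LinearMap.map_smul, dAlpha_dsingle]
  by_cases h2 : k ∈ x.2
  · rw [if_pos h2, smul_zero]
    exact zero_mem _
  · rw [if_neg h2]
    refine Submodule.smul_mem _ _ (Submodule.smul_mem _ _ ?_)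
    exact Finsupp.single_mem_supported _ 1 (charge_shift hk h2)

lemma dOmega_mem {n : ℤ} {z : DFock} (hz : z ∈ DFockCc n) : dOmega z ∈ DFockCc (n - 2) := by
  have hz' : z ∈ Finsupp.supported Dring Dring {x | charge x = n} :=
    (Finsupp.mem_supported _ _).2 ((Finsupp.mem_supported _ _).1 hz)
  have key : Finsupp.supported Dring Dring {x | charge x = n} ≤
      (Finsupp.supported Dring Dring {x | charge x = n - 2}).comap dOmega := by
    rw [Finsupp.supported_eq_span_single, Submodule.span_le]
    rintro _ ⟨x, hx, rfl⟩
    simp only [Submodule.mem_comap, SetLike.mem_coe]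
    have hd : dOmega (Finsupp.single x (1 : Dring)) =
        ∑ k ∈ x.1, dAlpha k (dBeta k (dsingle x)) := by
      rw [dOmega_single, one_smul]
    rw [hd]
    refine Submodule.sum_mem _ fun k hk => ?_
    have hterm := omegaTerm_mem x k hk
    have hx' : charge x = n := hx
    rwa [hx'] at hterm
  have := key hz'
  rw [Submodule.mem_comap, Finsupp.mem_supported] at this
  rw [DFockCc, Finsupp.mem_supported]
  exact this

lemma piF_mPart {n : ℤ} {z : DFock} (hz : z ∈ mPart n) : piF z = 0 := by
  have h : mPart n ≤ LinearMap.ker piF := by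
    rw [mPart, Submodule.span_le]
    rintro _ ⟨c, hc, v, _, rfl⟩
    simp [LinearMap.mem_ker, piF_smul, eps_mem_mIdeal hc]
  exact LinearMap.mem_ker.mp (h hz)

lemma mem_mPart_of_piF {n : ℤ} {z : DFock} (hz : z ∈ DFockCc n) (h0 : piF z = 0) :
    z ∈ mPart n := by
  have hz' : ↑z.support ⊆ {x | charge x = n} := (Finsupp.mem_supported _ z).1 hz
  have hrep : z = ∑ x ∈ z.support, (z x) • dsingle x := by
    conv_lhs => rw [← Finsupp.sum_single z]
    rw [Finsupp.sum]
    exact Finset.sum_congr rfl fun x _ => (single_eq_smul_dsingle x (z x))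
  rw [hrep]
  refine Submodule.sum_mem _ fun x hx => ?_
  refine Submodule.subset_span ⟨z x, ?_, dsingle x,
    Finsupp.single_mem_supported _ 1 (hz' hx), rfl⟩
  apply mem_mIdeal_of_eps
  have hzx : piF z x = 0 := by rw [h0]; rfl
  rwa [piF_apply] at hzx

lemma forward_mem (n : ℤ) {v : DFock} (hv : v ∈ NA n ⊔ mPart n) :
    piF v ∈ Submodule.map omega (FockC (n + 2)) := by
  have hle : NA n ⊔ mPart n ≤ Submodule.comap piF (Submodule.map omega (FockC (n + 2))) := by
    rw [NA]
    refine sup_le (sup_le ?_ ?_) ?_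
    · rintro _ ⟨w, _, rfl⟩
      simp only [Submodule.mem_comap, LinearMap.restrictScalars_apply]
      rw [piF_dOp]
      exact zero_mem _
    · rintro _ ⟨w, hw, rfl⟩
      simp only [Submodule.mem_comap, LinearMap.restrictScalars_apply]
      rw [piF_dOmega]
      exact ⟨piF w, piF_mem_FockC hw, rfl⟩
    · intro v hv
      simp only [Submodule.mem_comap]
      rw [piF_mPart hv]
      exact zero_mem _
  exact hle hv

lemma backward_mem (n : ℤ) {v : DFock} (hv : v ∈ DFockCc n)
    (hq : piF v ∈ Submodule.map omega (FockC (n + 2))) : v ∈ NA n ⊔ mPart n := by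
  obtain ⟨u, hu, huv⟩ := hq
  have hwK : dOmega (iotaF u) ∈ NA n ⊔ mPart n := by
    refine Submodule.mem_sup_left (Submodule.mem_sup_right ?_)
    exact ⟨iotaF u, iotaF_mem hu, rfl⟩
  have hwS : dOmega (iotaF u) ∈ DFockCc n := by
    have hmem := dOmega_mem (iotaF_mem hu)
    have he : n + 2 - 2 = n := by ring
    rwa [he] at hmem
  have hz : v - dOmega (iotaF u) ∈ mPart n := by
    apply mem_mPart_of_piF (sub_mem hv hwS)
    rw [map_sub, piF_dOmega, piF_iotaF, huv, sub_self]
  have hvw : v = dOmega (iotaF u) + (v - dOmega (iotaF u)) := by abel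
  rw [hvw]
  exact add_mem hwK (Submodule.mem_sup_right hz)

/-- Abstract comparison of two quotients through a linear map. -/
lemma quotient_compare {M N : Type} [AddCommGroup M] [Module ℂ M]
    [AddCommGroup N] [Module ℂ N]
    (S K : Submodule ℂ M) (Q : Submodule ℂ N) (p : M →ₗ[ℂ] N)
    (hiff : ∀ v ∈ S, (v ∈ K ↔ p v ∈ Q)) :
    Nonempty (↥(Submodule.map K.mkQ S) ≃ₗ[ℂ] ↥(Submodule.map Q.mkQ (Submodule.map p S))) := by
  let g : ↥S →ₗ[ℂ] M ⧸ K := K.mkQ ∘ₗ S.subtype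
  let f : ↥S →ₗ[ℂ] N ⧸ Q := Q.mkQ ∘ₗ (p ∘ₗ S.subtype)
  have hker : LinearMap.ker g = LinearMap.ker f := by
    ext ⟨v, hv⟩
    simp only [g, f, LinearMap.mem_ker, LinearMap.comp_apply, Submodule.subtype_apply,
      Submodule.mkQ_apply, Submodule.Quotient.mk_eq_zero]
    exact hiff v hv
  have hrangeg : LinearMap.range g = Submodule.map K.mkQ S := by
    rw [show g = K.mkQ ∘ₗ S.subtype from rfl, LinearMap.range_comp, Submodule.range_subtype]
  have hrangef : LinearMap.range f = Submodule.map Q.mkQ (Submodule.map p S) := by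
    rw [show f = Q.mkQ ∘ₗ (p ∘ₗ S.subtype) from rfl, LinearMap.range_comp,
      LinearMap.range_comp, Submodule.range_subtype]
  exact ⟨(LinearEquiv.ofEq _ _ hrangeg.symm).trans
    ((LinearMap.quotKerEquivRange g).symm.trans
      ((Submodule.quotEquivOfEq _ _ hker).trans
        ((LinearMap.quotKerEquivRange f).trans (LinearEquiv.ofEq _ _ hrangef))))⟩

/-- For every integer `m ≥ 0`, `A_m/𝔪A_m ≅ W_m` as `ℂ`-vector spaces,
where `𝔪 = (t₁,t₃,…) ⊆ 𝒟`. -/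
theorem minimal_generators_even (m : ℕ) :
    Nonempty (↥(AmodM m) ≃ₗ[ℂ] ↥(Wsub m)) := by
  have hmapPi : Submodule.map piF (DFockCc (m : ℤ)) = FockC (m : ℤ) := by
    apply le_antisymm
    · rintro _ ⟨v, hv, rfl⟩
      exact piF_mem_FockC hv
    · intro w hw
      exact ⟨iotaF w, iotaF_mem hw, piF_iotaF w⟩
  have h := quotient_compare (DFockCc (m : ℤ)) (NA (m : ℤ) ⊔ mPart (m : ℤ))
    (Submodule.map omega (FockC ((m : ℤ) + 2))) piF
    (fun v hv => ⟨fun hk => forward_mem (m : ℤ) hk, fun hq => backward_mem (m : ℤ) hv hq⟩)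
  rw [hmapPi] at h
  exact h

end
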